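/- Let x_1 < ... < x_n and y_1 < ... < y_n be real numbers. Then det(exp(x_i y_j))_{i,j=1}^n ≥ c_n · Δ(x) · Δ(y) · Π_{i=1}^n exp(x_i y_{n-i+1}), where c_n = (Π_{i=1}^n i!)^{-1} and Δ denotes the Vandermonde determinant Π_{i<j}(x_j − x_i). -/

import Mathlib

noncomputable def vandermonde (n : ℕ) (x : Fin n → ℝ) : ℝ :=
  ∏ i : Fin n, ∏ j ∈ Finset.Ioi i, (x j - x i)

noncomputable def cConst (n : ℕ) : ℝ :=
  ((∏ i ∈ Finset.Icc 1 n, Nat.factorial i : ℕ) : ℝ)⁻¹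

open MeasureTheory Matrix Finset Real

section Aux

lemma tele {n : ℕ} (A : Matrix (Fin (n+1)) (Fin (n+1)) ℝ) (γ : Fin n → ℝ)
    (h : ∀ j : Fin n, A 0 j.succ = γ j * A 0 j.castSucc) :
    A.det = A 0 0 *
      (Matrix.of fun i j : Fin n => A i.succ j.succ - γ j * A i.succ j.castSucc).det := by
  classical
  set C : Matrix (Fin (n+1)) (Fin (n+1)) ℝ := Matrix.of fun k l =>
    Fin.cases (motive := fun _ => ℝ) (if k = 0 then 1 else 0)
      (fun j => (if k = j.succ then (1:ℝ) else 0) + (if k = j.castSucc then -γ j else 0)) l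
      with hCdef
  have hC0 : ∀ k, C k 0 = if k = 0 then 1 else 0 := fun k => rfl
  have hCs : ∀ k (j : Fin n), C k j.succ =
      (if k = j.succ then (1:ℝ) else 0) + (if k = j.castSucc then -γ j else 0) :=
    fun k j => rfl
  have hCtri : C.BlockTriangular id := by
    intro k l hlk
    simp only [id] at hlk
    induction l using Fin.cases with
    | zero =>
      rw [hC0, if_neg (fun hk => by simp [hk] at hlk)]
    | succ j =>
      rw [hCs, if_neg (fun hk => by rw [hk] at hlk; exact lt_irrefl _ hlk),
        if_neg (fun hk => by
          rw [hk] at hlk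
          exact absurd (lt_trans hlk (Fin.castSucc_lt_succ (i := j))) (lt_irrefl _))]
      norm_num
  have hCdiag : ∀ k, C k k = 1 := by
    intro k
    induction k using Fin.cases with
    | zero => rw [hC0, if_pos rfl]
    | succ j =>
      rw [hCs, if_pos rfl, if_neg (fun hk => by
        exact absurd hk.symm (Fin.castSucc_lt_succ (i := j)).ne)]
      norm_num
  have hdetC : C.det = 1 := by
    rw [Matrix.det_of_upperTriangular hCtri]
    exact Finset.prod_eq_one fun k _ => hCdiag k
  have hmul0 : ∀ i, (A * C) i 0 = A i 0 := by
    intro i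
    rw [Matrix.mul_apply]
    have : ∀ k, A i k * C k 0 = if k = 0 then A i 0 else 0 := by
      intro k; rw [hC0]; split
      · next hk => rw [hk, mul_one]
      · rw [mul_zero]
    simp only [this]
    exact Finset.sum_ite_eq' _ _ _ |>.trans (by simp)
  have hmuls : ∀ i (j : Fin n), (A * C) i j.succ = A i j.succ - γ j * A i j.castSucc := by
    intro i j
    rw [Matrix.mul_apply]
    have : ∀ k, A i k * C k j.succ =
        (if k = j.succ then A i j.succ else 0) + (if k = j.castSucc then -(γ j * A i j.castSucc) else 0) := by
      intro k; rw [hCs, mul_add]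
      congr 1
      · split
        · next hk => rw [hk, mul_one]
        · rw [mul_zero]
      · split
        · next hk => rw [hk]; ring
        · rw [mul_zero]
    simp only [this]
    rw [Finset.sum_add_distrib, Finset.sum_ite_eq' _ _ (fun k => A i j.succ),
      Finset.sum_ite_eq' _ _ (fun k => -(γ j * A i j.castSucc))]
    simp [sub_eq_add_neg]
  have key : A.det = (A * C).det := by rw [Matrix.det_mul, hdetC, mul_one]
  rw [key, Matrix.det_succ_row_zero]
  rw [Finset.sum_eq_single 0]
  · rw [hmul0 0, Fin.succAbove_zero]
    simp only [Fin.val_zero, pow_zero, one_mul]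
    have he : ((A * C).submatrix Fin.succ Fin.succ) =
        (Matrix.of fun i j : Fin n => A i.succ j.succ - γ j * A i.succ j.castSucc) := by
      ext i j
      rw [Matrix.submatrix_apply, hmuls, Matrix.of_apply]
    rw [he]
  · intro b _ hb
    obtain ⟨j, rfl⟩ := Fin.eq_succ_of_ne_zero hb
    rw [hmuls 0 j, h j, sub_self, mul_zero, zero_mul]
  · intro hmem; exact absurd (Finset.mem_univ 0) hmem

lemma integral_exp_mul (c a b : ℝ) (hc : c ≠ 0) :
    (∫ t in a..b, Real.exp (c * t)) = (Real.exp (c * b) - Real.exp (c * a)) / c := by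
  have D : ∀ x : ℝ, HasDerivAt (fun y : ℝ => Real.exp (c * y) / c) (Real.exp (c * x)) x := by
    intro x
    have h1 : HasDerivAt (fun y : ℝ => c * y) c x := by
      simpa using (hasDerivAt_id x).const_mul c
    have h3 := ((Real.hasDerivAt_exp (c * x)).comp x h1).div_const c
    field_simp at h3
    exact h3
  rw [intervalIntegral.integral_eq_sub_of_hasDerivAt (fun x _ => D x)]
  · ring
  · exact (Real.continuous_exp.comp (continuous_const.mul continuous_id)).intervalIntegrable a b

lemma entry_exp (u X a b : ℝ) :
    Real.exp (u * b) - Real.exp (X * (b - a)) * Real.exp (u * a)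
      = Real.exp (X * b) * ((u - X) * ∫ t in a..b, Real.exp ((u - X) * t)) := by
  rcases eq_or_ne u X with rfl | hne
  · simp [← Real.exp_add]; ring_nf
  · have hc : u - X ≠ 0 := sub_ne_zero.mpr hne
    rw [integral_exp_mul _ _ _ hc, mul_div_cancel₀ _ hc]
    have e1 : Real.exp (X*b) * Real.exp ((u-X)*b) = Real.exp (u*b) := by
      rw [← Real.exp_add]; ring_nf
    have e2 : Real.exp (X*b) * Real.exp ((u-X)*a) = Real.exp (X*(b-a)) * Real.exp (u*a) := by
      rw [← Real.exp_add, ← Real.exp_add]; ring_nf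
    rw [mul_sub (Real.exp (X*b)) (Real.exp ((u-X)*b)) (Real.exp ((u-X)*a)), e1, e2]

lemma exch {n : ℕ} (a b : Fin n → ℝ) (W : Fin n → ℝ → Fin n → ℝ)
    (hW : ∀ j i, Continuous fun t => W j t i) :
    Matrix.det (Matrix.of fun i j => ∫ t in Set.Icc (a j) (b j), W j t i) =
      ∫ z in Set.univ.pi fun j => Set.Icc (a j) (b j),
        Matrix.det (Matrix.of fun i j : Fin n => W j (z j) i) := by
  classical
  have hbox : MeasurableSet (Set.univ.pi fun j => Set.Icc (a j) (b j)) :=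
    MeasurableSet.univ_pi fun j => measurableSet_Icc
  have hcomp : IsCompact (Set.univ.pi fun j => Set.Icc (a j) (b j)) :=
    isCompact_univ_pi fun j => isCompact_Icc
  simp only [Matrix.det_apply, Matrix.of_apply, Units.smul_def, zsmul_eq_mul]
  rw [MeasureTheory.integral_finset_sum]
  · refine Finset.sum_congr rfl fun σ _ => ?_
    rw [MeasureTheory.integral_const_mul]
    congr 1
    refine Eq.symm ?_
    calc (∫ z in Set.univ.pi fun j => Set.Icc (a j) (b j), ∏ i, W i (z i) (σ i))
        = ∫ z : Fin n → ℝ, (Set.univ.pi fun j => Set.Icc (a j) (b j)).indicator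
            (fun z => ∏ i, W i (z i) (σ i)) z := (MeasureTheory.integral_indicator hbox).symm
      _ = ∫ z : Fin n → ℝ, ∏ i,
            (Set.Icc (a i) (b i)).indicator (fun t => W i t (σ i)) (z i) := by
          congr 1
          funext z
          by_cases hz : z ∈ Set.univ.pi fun j => Set.Icc (a j) (b j)
          · rw [Set.indicator_of_mem hz]
            refine Finset.prod_congr rfl fun i _ => ?_
            rw [Set.indicator_of_mem (hz i (Set.mem_univ i))]
          · rw [Set.indicator_of_notMem hz]
            rw [Set.mem_pi] at hz
            push_neg at hz
            obtain ⟨i0, -, hi0⟩ := hz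
            exact (Finset.prod_eq_zero (Finset.mem_univ i0)
              (Set.indicator_of_notMem hi0 _)).symm
      _ = ∏ i, ∫ t : ℝ, (Set.Icc (a i) (b i)).indicator (fun t => W i t (σ i)) t :=
          MeasureTheory.integral_fintype_prod_eq_prod (ι := Fin n)
            (fun i => (Set.Icc (a i) (b i)).indicator (fun t => W i t (σ i)))
      _ = ∏ i, ∫ t in Set.Icc (a i) (b i), W i t (σ i) :=
          Finset.prod_congr rfl fun i _ =>
            MeasureTheory.integral_indicator measurableSet_Icc
  · intro σ _
    have hcont : Continuous fun z : Fin n → ℝ =>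
        ((Equiv.Perm.sign σ : ℤ) : ℝ) * ∏ i, W i (z i) (σ i) :=
      continuous_const.mul (continuous_finset_prod _ fun i _ => (hW i (σ i)).comp (continuous_apply i))
    exact hcont.continuousOn.integrableOn_compact hcomp

lemma icc_eq_interval {a b : ℝ} (h : a ≤ b) (f : ℝ → ℝ) :
    ∫ t in Set.Icc a b, f t = ∫ t in a..b, f t := by
  rw [intervalIntegral.integral_of_le h, MeasureTheory.integral_Icc_eq_integral_Ioc]

lemma det_colrow_scale {n : ℕ} (c r : Fin n → ℝ) (A : Matrix (Fin n) (Fin n) ℝ) :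
    Matrix.det (Matrix.of fun i j => c j * (r i * A i j))
      = (∏ j, c j) * ((∏ i, r i) * A.det) := by
  rw [show (Matrix.of fun i j => c j * (r i * A i j))
      = Matrix.of (fun i j => c j * (Matrix.of fun i' j' => r i' * A i' j') i j) from rfl]
  rw [Matrix.det_mul_row, Matrix.det_mul_column]

lemma det_col_scale {n : ℕ} (c : Fin n → ℝ) (A : Matrix (Fin n) (Fin n) ℝ) :
    Matrix.det (Matrix.of fun i j => c j * A i j) = (∏ j, c j) * A.det :=
  Matrix.det_mul_row c A

lemma det_row_scale {n : ℕ} (r : Fin n → ℝ) (A : Matrix (Fin n) (Fin n) ℝ) :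
    Matrix.det (Matrix.of fun i j => r i * A i j) = (∏ i, r i) * A.det :=
  Matrix.det_mul_column r A

lemma vandermonde_eq_det {n : ℕ} (x : Fin n → ℝ) :
    _root_.vandermonde n x = (Matrix.vandermonde x).det := (Matrix.det_vandermonde x).symm

lemma vandermonde_eq_det' {n : ℕ} (x : Fin n → ℝ) :
    _root_.vandermonde n x = Matrix.det (Matrix.of fun i j : Fin n => x j ^ (i : ℕ)) := by
  rw [vandermonde_eq_det, ← Matrix.det_transpose]
  rfl

lemma vandermonde_nonneg {n : ℕ} {x : Fin n → ℝ} (hx : Monotone x) : 0 ≤ _root_.vandermonde n x :=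
  Finset.prod_nonneg fun i _ => Finset.prod_nonneg fun j hj =>
    sub_nonneg.mpr (hx (le_of_lt (Finset.mem_Ioi.mp hj)))

lemma vandermonde_continuous (n : ℕ) : Continuous fun z : Fin n → ℝ => _root_.vandermonde n z := by
  unfold _root_.vandermonde
  exact continuous_finset_prod _ fun i _ => continuous_finset_prod _ fun j _ =>
    (continuous_apply j).sub (continuous_apply i)

lemma vandermonde_split {n : ℕ} (x : Fin (n+1) → ℝ) :
    _root_.vandermonde (n+1) x = (∏ i : Fin n, (x i.succ - x 0)) * _root_.vandermonde n (x ∘ Fin.succ) := by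
  unfold _root_.vandermonde
  rw [Fin.prod_univ_succ, Fin.prod_Ioi_zero]
  congr 1
  refine Finset.prod_congr rfl fun i _ => ?_
  rw [Fin.prod_Ioi_succ]
  rfl

lemma cConst_zero : cConst 0 = 1 := by simp [cConst]

lemma cConst_succ (n : ℕ) : cConst (n+1) = cConst n * ((Nat.factorial (n+1) : ℝ))⁻¹ := by
  unfold cConst
  rw [Finset.prod_Icc_succ_top (Nat.le_add_left 1 n)]
  push_cast
  rw [mul_inv]

lemma cConst_pos (n : ℕ) : 0 < cConst n := by
  unfold cConst
  refine inv_pos.mpr ?_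
  exact_mod_cast Nat.pos_of_ne_zero (Finset.prod_ne_zero_iff.mpr fun i _ => Nat.factorial_ne_zero i)

lemma fin_prod_succ_factorial (n : ℕ) :
    (∏ i : Fin n, (((i : ℕ) : ℝ) + 1)) = (Nat.factorial n : ℝ) := by
  rw [Fin.prod_univ_eq_prod_range (fun k => ((k : ℝ) + 1)), ← Finset.prod_range_add_one_eq_factorial]
  push_cast
  rfl

lemma rev_zero' (n : ℕ) : (Fin.rev (0 : Fin (n+1))) = Fin.last n := by
  ext
  simp [Fin.val_rev]

end Aux

theorem main : ∀ (n : ℕ) (x y : Fin n → ℝ), Monotone x → Monotone y →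
    cConst n * vandermonde n x * vandermonde n y * (∏ i, Real.exp (x i * y i.rev))
      ≤ Matrix.det (Matrix.of fun i j : Fin n => Real.exp (x i * y j))
  | 0 => by
    intro x y _ _
    show cConst 0 * vandermonde 0 x * vandermonde 0 y * (∏ i, Real.exp (x i * y i.rev)) ≤ _
    rw [Matrix.det_fin_zero, cConst_zero]
    unfold _root_.vandermonde
    simp
  | (n+1) => by
    intro x y hx hy
    have ih := main n
    classical
    set M : Matrix (Fin (n+1)) (Fin (n+1)) ℝ :=
      Matrix.of fun i j : Fin (n+1) => Real.exp (x i * y j) with hM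
    set γ : Fin n → ℝ := fun j => Real.exp (x 0 * (y j.succ - y j.castSucc)) with hγ
    set box : Set (Fin n → ℝ) := Set.univ.pi fun j => Set.Icc (y j.castSucc) (y j.succ) with hbox
    have hboxm : MeasurableSet box := MeasurableSet.univ_pi fun j => measurableSet_Icc
    have hboxc : IsCompact box := isCompact_univ_pi fun j => isCompact_Icc
    have hyc : ∀ j : Fin n, y j.castSucc ≤ y j.succ :=
      fun j => hy (le_of_lt (Fin.castSucc_lt_succ (i := j)))
    have hxs : ∀ i : Fin n, x 0 ≤ x i.succ := fun i => hx (Fin.zero_le _)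
    have hxm : Monotone (x ∘ Fin.succ) :=
      hx.comp fun a b hab => Fin.succ_le_succ_iff.mpr hab
    -- Step 1: telescoping
    have h1 : M.det = M 0 0 *
        (Matrix.of fun i j : Fin n => M i.succ j.succ - γ j * M i.succ j.castSucc).det := by
      refine tele M γ fun j => ?_
      show Real.exp (x 0 * y j.succ) = γ j * Real.exp (x 0 * y j.castSucc)
      rw [hγ, ← Real.exp_add]
      ring_nf
    -- G and step 2+3
    set G : Matrix (Fin n) (Fin n) ℝ := Matrix.of fun i j : Fin n =>
      ∫ t in Set.Icc (y j.castSucc) (y j.succ), Real.exp ((x i.succ - x 0) * t) with hG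
    have h2 : (Matrix.of fun i j : Fin n => M i.succ j.succ - γ j * M i.succ j.castSucc)
        = Matrix.of fun i j : Fin n =>
            Real.exp (x 0 * y j.succ) * ((x i.succ - x 0) * G i j) := by
      ext i j
      show Real.exp (x i.succ * y j.succ)
          - Real.exp (x 0 * (y j.succ - y j.castSucc)) * Real.exp (x i.succ * y j.castSucc) = _
      rw [entry_exp (x i.succ) (x 0) (y j.castSucc) (y j.succ)]
      show _ = Real.exp (x 0 * y j.succ) * ((x i.succ - x 0) * G i j)
      rw [hG]
      show _ = Real.exp (x 0 * y j.succ) * ((x i.succ - x 0) *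
        ∫ t in Set.Icc (y j.castSucc) (y j.succ), Real.exp ((x i.succ - x 0) * t))
      rw [icc_eq_interval (hyc j)]
    have h3 : (Matrix.of fun i j : Fin n =>
          Real.exp (x 0 * y j.succ) * ((x i.succ - x 0) * G i j)).det
        = (∏ j : Fin n, Real.exp (x 0 * y j.succ)) * ((∏ i : Fin n, (x i.succ - x 0)) * G.det) :=
      det_colrow_scale _ _ G
    -- Step 4 : exchange
    have h4 : G.det = ∫ z in box,
        Matrix.det (Matrix.of fun i j : Fin n => Real.exp ((x i.succ - x 0) * z j)) := by
      rw [hG, hbox]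
      exact exch (fun j => y j.castSucc) (fun j => y j.succ)
        (fun j t i => Real.exp ((x i.succ - x 0) * t))
        (fun j i => Real.continuous_exp.comp (continuous_const.mul continuous_id))
    -- constant Q
    set Q : ℝ := ∏ i : Fin n, Real.exp ((x i.succ - x 0) * y (Fin.rev i).castSucc) with hQ
    -- Step 5 : pointwise bound
    have h5 : ∀ z ∈ box, cConst n * vandermonde n (x ∘ Fin.succ) * Q * vandermonde n z
        ≤ Matrix.det (Matrix.of fun i j : Fin n => Real.exp ((x i.succ - x 0) * z j)) := by
      intro z hz
      have hzmem : ∀ j : Fin n, z j ∈ Set.Icc (y j.castSucc) (y j.succ) :=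
        fun j => hz j (Set.mem_univ j)
      have hzmono : Monotone z := by
        intro j k hjk
        rcases eq_or_lt_of_le hjk with rfl | hlt
        · exact le_refl _
        · calc z j ≤ y j.succ := (hzmem j).2
            _ ≤ y k.castSucc := hy (Fin.succ_le_castSucc_iff.mpr hlt)
            _ ≤ z k := (hzmem k).1
      have hvz : 0 ≤ vandermonde n z := vandermonde_nonneg hzmono
      have hvx : 0 ≤ vandermonde n (x ∘ Fin.succ) := vandermonde_nonneg hxm
      have hdet : Matrix.det (Matrix.of fun i j : Fin n => Real.exp ((x i.succ - x 0) * z j))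
          = (∏ j : Fin n, Real.exp (-(x 0) * z j)) *
            Matrix.det (Matrix.of fun i j : Fin n => Real.exp (x i.succ * z j)) := by
        rw [← det_col_scale (fun j => Real.exp (-(x 0) * z j))
          (Matrix.of fun i j : Fin n => Real.exp (x i.succ * z j))]
        congr 1
        ext i j
        show Real.exp ((x i.succ - x 0) * z j) = Real.exp (-(x 0) * z j) * Real.exp (x i.succ * z j)
        rw [← Real.exp_add]
        ring_nf
      have hihz := ih (x ∘ Fin.succ) z hxm hzmono
      simp only [Function.comp_apply] at hihz
      have hQle : Q ≤ ∏ i : Fin n, Real.exp ((x i.succ - x 0) * z (Fin.rev i)) := by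
        rw [hQ]
        refine Finset.prod_le_prod (fun i _ => (Real.exp_pos _).le) fun i _ => ?_
        refine Real.exp_le_exp.mpr (mul_le_mul_of_nonneg_left ?_ (sub_nonneg.mpr (hxs i)))
        exact (hzmem (Fin.rev i)).1
      have hsplit : ∀ i : Fin n, Real.exp ((x i.succ - x 0) * z (Fin.rev i))
          = Real.exp (-(x 0) * z (Fin.rev i)) * Real.exp (x i.succ * z (Fin.rev i)) := by
        intro i; rw [← Real.exp_add]; ring_nf
      have hrevz : (∏ i : Fin n, Real.exp (-(x 0) * z (Fin.rev i)))
          = ∏ j : Fin n, Real.exp (-(x 0) * z j) := by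
        have := Equiv.prod_comp Fin.revPerm (fun j => Real.exp (-(x 0) * z j))
        simpa [Fin.revPerm_apply] using this
      have hrev1 : (∏ i : Fin n, Real.exp ((x i.succ - x 0) * z (Fin.rev i)))
          = (∏ j : Fin n, Real.exp (-(x 0) * z j)) *
            ∏ i : Fin n, Real.exp (x i.succ * z (Fin.rev i)) := by
        rw [Finset.prod_congr rfl fun i _ => hsplit i, Finset.prod_mul_distrib, hrevz]
      have hnn : 0 ≤ cConst n * vandermonde n (x ∘ Fin.succ) * vandermonde n z :=
        mul_nonneg (mul_nonneg (cConst_pos n).le hvx) hvz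
      calc cConst n * vandermonde n (x ∘ Fin.succ) * Q * vandermonde n z
          = (cConst n * vandermonde n (x ∘ Fin.succ) * vandermonde n z) * Q := by ring
        _ ≤ (cConst n * vandermonde n (x ∘ Fin.succ) * vandermonde n z) *
              ∏ i : Fin n, Real.exp ((x i.succ - x 0) * z (Fin.rev i)) :=
            mul_le_mul_of_nonneg_left hQle hnn
        _ = (∏ j : Fin n, Real.exp (-(x 0) * z j)) *
              (cConst n * vandermonde n (x ∘ Fin.succ) * vandermonde n z *
                ∏ i : Fin n, Real.exp (x i.succ * z i.rev)) := by
            rw [hrev1]; ring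
        _ ≤ (∏ j : Fin n, Real.exp (-(x 0) * z j)) *
              Matrix.det (Matrix.of fun i j : Fin n => Real.exp (x i.succ * z j)) :=
            mul_le_mul_of_nonneg_left hihz
              (Finset.prod_nonneg fun j _ => (Real.exp_pos _).le)
        _ = _ := hdet.symm
    -- Step 6 : integrate
    have hint2 : IntegrableOn (fun z : Fin n → ℝ =>
        Matrix.det (Matrix.of fun i j : Fin n => Real.exp ((x i.succ - x 0) * z j))) box := by
      have hc : Continuous fun z : Fin n → ℝ =>
          Matrix.det (Matrix.of fun i j : Fin n => Real.exp ((x i.succ - x 0) * z j)) := by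
        refine Continuous.matrix_det (continuous_matrix fun i j => ?_)
        exact Real.continuous_exp.comp (continuous_const.mul (continuous_apply j))
      exact hc.continuousOn.integrableOn_compact hboxc
    have hint1 : IntegrableOn (fun z : Fin n → ℝ =>
        cConst n * vandermonde n (x ∘ Fin.succ) * Q * vandermonde n z) box :=
      ((continuous_const.mul (vandermonde_continuous n)).continuousOn).integrableOn_compact hboxc
    have h6 : cConst n * vandermonde n (x ∘ Fin.succ) * Q * (∫ z in box, vandermonde n z)
        ≤ G.det := by
      rw [h4]
      calc cConst n * vandermonde n (x ∘ Fin.succ) * Q * (∫ z in box, vandermonde n z)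
          = ∫ z in box, cConst n * vandermonde n (x ∘ Fin.succ) * Q * vandermonde n z := by
            rw [MeasureTheory.integral_const_mul]
        _ ≤ _ := setIntegral_mono_on hint1 hint2 hboxm h5
    -- Step 7 : integral of vandermonde
    have h7 : (∫ z in box, vandermonde n z)
        = ((Nat.factorial n : ℝ))⁻¹ * vandermonde (n+1) y := by
      have e1 : (∫ z in box, vandermonde n z)
          = ∫ z in box, Matrix.det (Matrix.of fun i j : Fin n => (z j) ^ (i : ℕ)) := by
        simp only [vandermonde_eq_det']
      have e2 : (∫ z in box, Matrix.det (Matrix.of fun i j : Fin n => (z j) ^ (i : ℕ)))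
          = Matrix.det (Matrix.of fun i j : Fin n =>
              ∫ t in Set.Icc (y j.castSucc) (y j.succ), t ^ (i : ℕ)) := by
        rw [hbox]
        exact (exch (fun j => y j.castSucc) (fun j => y j.succ)
          (fun j t i => t ^ (i : ℕ)) (fun j i => continuous_pow _)).symm
      have e3 : (Matrix.of fun i j : Fin n =>
            ∫ t in Set.Icc (y j.castSucc) (y j.succ), t ^ (i : ℕ))
          = Matrix.of fun i j : Fin n => (((i : ℕ) : ℝ) + 1)⁻¹ *
              (y j.succ ^ ((i : ℕ) + 1) - y j.castSucc ^ ((i : ℕ) + 1)) := by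
        ext i j
        show (∫ t in Set.Icc (y j.castSucc) (y j.succ), t ^ (i : ℕ)) = _
        rw [icc_eq_interval (hyc j), integral_pow, div_eq_mul_inv, mul_comm]
        rfl
      have e4 : Matrix.det (Matrix.of fun i j : Fin n => (((i : ℕ) : ℝ) + 1)⁻¹ *
              (y j.succ ^ ((i : ℕ) + 1) - y j.castSucc ^ ((i : ℕ) + 1)))
          = (∏ i : Fin n, (((i : ℕ) : ℝ) + 1)⁻¹) *
            Matrix.det (Matrix.of fun i j : Fin n =>
              y j.succ ^ ((i : ℕ) + 1) - y j.castSucc ^ ((i : ℕ) + 1)) :=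
        det_row_scale _ _
      have e5 : (∏ i : Fin n, (((i : ℕ) : ℝ) + 1)⁻¹) = ((Nat.factorial n : ℝ))⁻¹ := by
        rw [← fin_prod_succ_factorial n, ← Finset.prod_inv_distrib]
      have e6 : Matrix.det (Matrix.of fun i j : Fin n =>
            y j.succ ^ ((i : ℕ) + 1) - y j.castSucc ^ ((i : ℕ) + 1))
          = vandermonde (n+1) y := by
        have hA := tele (Matrix.of fun i j : Fin (n+1) => y j ^ (i : ℕ)) (fun _ => 1)
          (fun j => by
            show y j.succ ^ ((0 : Fin (n+1)) : ℕ) = 1 * y j.castSucc ^ ((0 : Fin (n+1)) : ℕ)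
            simp)
        have hA00 : (Matrix.of fun i j : Fin (n+1) => y j ^ (i : ℕ)) 0 0 = 1 := by
          show y 0 ^ ((0 : Fin (n+1)) : ℕ) = 1
          simp
        rw [vandermonde_eq_det' y, hA, hA00, one_mul]
        congr 1
        ext i j
        show y j.succ ^ ((i : ℕ) + 1) - y j.castSucc ^ ((i : ℕ) + 1)
          = y j.succ ^ ((i.succ : Fin (n+1)) : ℕ) - 1 * y j.castSucc ^ ((i.succ : Fin (n+1)) : ℕ)
        rw [one_mul, Fin.val_succ]
      rw [e1, e2, e3, e4, e5, e6]
    -- Step 8 : assemble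
    have h6' : cConst n * vandermonde n (x ∘ Fin.succ) * Q *
        (((Nat.factorial n : ℝ))⁻¹ * vandermonde (n+1) y) ≤ G.det := by
      rw [← h7]; exact h6
    have hMdet : M.det = Real.exp (x 0 * y 0) * ((∏ j : Fin n, Real.exp (x 0 * y j.succ)) *
        ((∏ i : Fin n, (x i.succ - x 0)) * G.det)) := by
      rw [h1, h2, h3]
      rfl
    have hE : (∏ i : Fin (n+1), Real.exp (x i * y i.rev))
        = Real.exp (x 0 * y 0) * ((∏ j : Fin n, Real.exp (x 0 * y j.succ)) * Q) := by
      rw [hQ, ← Real.exp_sum, ← Real.exp_sum, ← Real.exp_sum, ← Real.exp_add, ← Real.exp_add]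
      congr 1
      have hs1 : (∑ j : Fin (n+1), y j) = y 0 + ∑ j : Fin n, y j.succ := Fin.sum_univ_succ y
      have hs2 : (∑ j : Fin (n+1), y j) = (∑ j : Fin n, y j.castSucc) + y (Fin.last n) :=
        Fin.sum_univ_castSucc y
      have hr : (∑ i : Fin n, y ((Fin.rev i).castSucc)) = ∑ i : Fin n, y i.castSucc := by
        have := Equiv.sum_comp Fin.revPerm (fun i : Fin n => y i.castSucc)
        simpa [Fin.revPerm_apply] using this
      rw [Fin.sum_univ_succ (fun i : Fin (n+1) => x i * y i.rev)]
      simp only [Fin.rev_succ, rev_zero']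
      have expand : (∑ i : Fin n, (x i.succ - x 0) * y (Fin.rev i).castSucc)
          = (∑ i : Fin n, x i.succ * y (Fin.rev i).castSucc)
            - x 0 * ∑ i : Fin n, y ((Fin.rev i).castSucc) := by
        rw [Finset.mul_sum, ← Finset.sum_sub_distrib]
        exact Finset.sum_congr rfl fun i _ => by ring
      rw [expand, hr]
      have hy0 : y 0 + (∑ j : Fin n, y j.succ) - (∑ j : Fin n, y j.castSucc) = y (Fin.last n) := by
        rw [← hs1, hs2]; ring
      have hms : (∑ j : Fin n, x 0 * y j.succ) = x 0 * ∑ j : Fin n, y j.succ :=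
        (Finset.mul_sum _ _ _).symm
      linear_combination (-(x 0)) * hy0 - hms
    have hprodx : 0 ≤ ∏ i : Fin n, (x i.succ - x 0) :=
      Finset.prod_nonneg fun i _ => sub_nonneg.mpr (hxs i)
    have hvy : 0 ≤ vandermonde (n+1) y := vandermonde_nonneg hy
    have hvx : 0 ≤ vandermonde n (x ∘ Fin.succ) := vandermonde_nonneg hxm
    have hQnn : 0 ≤ Q := Finset.prod_nonneg fun i _ => (Real.exp_pos _).le
    have hexp0 : 0 ≤ Real.exp (x 0 * y 0) := (Real.exp_pos _).le
    have hexpP : 0 ≤ ∏ j : Fin n, Real.exp (x 0 * y j.succ) :=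
      Finset.prod_nonneg fun j _ => (Real.exp_pos _).le
    have hcc : cConst (n+1) ≤ cConst n * ((Nat.factorial n : ℝ))⁻¹ := by
      rw [cConst_succ]
      refine mul_le_mul_of_nonneg_left ?_ (cConst_pos n).le
      refine inv_anti₀ ?_ ?_
      · exact_mod_cast Nat.factorial_pos n
      · exact_mod_cast Nat.factorial_le (Nat.le_succ n)
    have hF : 0 ≤ (∏ i : Fin n, (x i.succ - x 0)) * vandermonde n (x ∘ Fin.succ) *
        vandermonde (n+1) y * (Real.exp (x 0 * y 0) *
          ((∏ j : Fin n, Real.exp (x 0 * y j.succ)) * Q)) := by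
      refine mul_nonneg (mul_nonneg (mul_nonneg hprodx hvx) hvy) ?_
      exact mul_nonneg hexp0 (mul_nonneg hexpP hQnn)
    calc cConst (n+1) * vandermonde (n+1) x * vandermonde (n+1) y *
          (∏ i : Fin (n+1), Real.exp (x i * y i.rev))
        = cConst (n+1) * ((∏ i : Fin n, (x i.succ - x 0)) * vandermonde n (x ∘ Fin.succ) *
            vandermonde (n+1) y * (Real.exp (x 0 * y 0) *
              ((∏ j : Fin n, Real.exp (x 0 * y j.succ)) * Q))) := by
          rw [vandermonde_split x, hE]; ring
      _ ≤ (cConst n * ((Nat.factorial n : ℝ))⁻¹) *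
            ((∏ i : Fin n, (x i.succ - x 0)) * vandermonde n (x ∘ Fin.succ) *
            vandermonde (n+1) y * (Real.exp (x 0 * y 0) *
              ((∏ j : Fin n, Real.exp (x 0 * y j.succ)) * Q))) :=
          mul_le_mul_of_nonneg_right hcc hF
      _ = Real.exp (x 0 * y 0) * ((∏ j : Fin n, Real.exp (x 0 * y j.succ)) *
            ((∏ i : Fin n, (x i.succ - x 0)) *
              (cConst n * vandermonde n (x ∘ Fin.succ) * Q *
                (((Nat.factorial n : ℝ))⁻¹ * vandermonde (n+1) y)))) := by ring
      _ ≤ Real.exp (x 0 * y 0) * ((∏ j : Fin n, Real.exp (x 0 * y j.succ)) *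
            ((∏ i : Fin n, (x i.succ - x 0)) * G.det)) := by
          refine mul_le_mul_of_nonneg_left ?_ hexp0
          refine mul_le_mul_of_nonneg_left ?_ hexpP
          exact mul_le_mul_of_nonneg_left h6' hprodx
      _ = M.det := hMdet.symm

theorem stmt12 (n : ℕ) (x y : Fin n → ℝ) (hx : StrictMono x) (hy : StrictMono y) :
    cConst n * vandermonde n x * vandermonde n y * ∏ i, Real.exp (x i * y i.rev)
      ≤ Matrix.det (Matrix.of fun i j : Fin n => Real.exp (x i * y j)) :=
  main n x y hx.monotone hy.monotone
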